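/- arXiv:1807.06130 — 4 statements merged into one kernel-verified Lean document; each statement's English description precedes it below -/
import Mathlib

section
/- The function γ(t) = (1/(2π^{3/2})) ∑_{n=0}^∞ (4^n/n!) Γ(n/2 + 1/4)² (t - 1/2)^n satisfies the differential equation t(1-t)γ''(t) + (1-2t)γ'(t) - (1/4)γ(t) = 0 on its disk of convergence |t - 1/2| < 1/2. -/
open Real

/-- `γ(t) = (1/(2π^{3/2})) ∑ₙ (4ⁿ/n!) Γ(n/2+1/4)² (t-1/2)ⁿ`. -/
noncomputable def gammaFun : ℝ → ℝ :=
  fun t => (1 / (2 * Real.pi ^ ((3 : ℝ) / 2))) *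
    ∑' n : ℕ, ((4 : ℝ) ^ n / (Nat.factorial n : ℝ)) * (Real.Gamma ((n : ℝ) / 2 + 1 / 4)) ^ 2 * (t - 1 / 2) ^ n

section Aux

open FormalMultilinearSeries
open scoped NNReal ENNReal

noncomputable def gCoeff : ℕ → ℝ :=
  fun n => (4 : ℝ) ^ n / (Nat.factorial n : ℝ) * (Real.Gamma ((n : ℝ) / 2 + 1 / 4)) ^ 2

lemma gCoeff_pos (n : ℕ) : 0 < gCoeff n := by
  have h1 : (0:ℝ) < (n : ℝ) / 2 + 1 / 4 := by positivity
  have h2 := Real.Gamma_pos_of_pos h1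
  have h3 : (0:ℝ) < (Nat.factorial n : ℝ) := by exact_mod_cast n.factorial_pos
  unfold gCoeff
  positivity

lemma gCoeff_rec (n : ℕ) :
    gCoeff (n + 2) * (((n:ℝ) + 2) * ((n:ℝ) + 1)) = (2 * (n:ℝ) + 1) ^ 2 * gCoeff n := by
  have h1 : (0:ℝ) < (n : ℝ) / 2 + 1 / 4 := by positivity
  have hg : Real.Gamma ((n : ℝ)/2 + 1/4 + 1) = ((n : ℝ)/2 + 1/4) * Real.Gamma ((n:ℝ)/2+1/4) :=
    Real.Gamma_add_one h1.ne'
  have harg : (((n + 2 : ℕ)) : ℝ)/2 + 1/4 = (n:ℝ)/2 + 1/4 + 1 := by push_cast; ring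
  have hfac : (((n+2).factorial : ℕ) : ℝ) = ((n:ℝ)+2) * ((n:ℝ)+1) * (n.factorial : ℝ) := by
    rw [Nat.factorial_succ, Nat.factorial_succ]; push_cast; ring
  have hfn : ((n.factorial : ℕ) : ℝ) ≠ 0 := by
    exact_mod_cast n.factorial_ne_zero
  unfold gCoeff
  rw [harg, hg, hfac]
  have h2 : ((n:ℝ)+2) * ((n:ℝ)+1) ≠ 0 := by positivity
  field_simp
  ring

noncomputable def gC : ℝ := max (gCoeff 0) (gCoeff 1 / 2)

lemma gCoeff_le : ∀ n, gCoeff n ≤ gC * 2 ^ n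
  | 0 => by simpa [gC] using le_max_left (gCoeff 0) (gCoeff 1 / 2)
  | 1 => by
      have := le_max_right (gCoeff 0) (gCoeff 1 / 2)
      rw [gC]; nlinarith [this]
  | (n+2) => by
      have ih := gCoeff_le n
      have hrec := gCoeff_rec n
      have hn : (0:ℝ) ≤ (n:ℝ) := n.cast_nonneg
      have hpos := (gCoeff_pos n).le
      have hle : gCoeff (n+2) ≤ 4 * gCoeff n := by nlinarith
      have h4 : (4:ℝ) * (gC * 2 ^ n) = gC * 2 ^ (n+2) := by ring
      nlinarith

lemma gRadius : ((1/2 : ℝ≥0) : ℝ≥0∞) ≤ (ofScalars ℝ gCoeff).radius := by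
  apply FormalMultilinearSeries.le_radius_of_bound _ gC
  intro n
  rw [FormalMultilinearSeries.ofScalars_norm]
  have h1 : ‖gCoeff n‖ = gCoeff n := abs_of_pos (gCoeff_pos n)
  have h2 : ((1/2 : ℝ≥0) : ℝ) = 1/2 := by norm_num
  rw [h1, h2]
  have := gCoeff_le n
  have h3 : (0:ℝ) < (1/2:ℝ)^n := by positivity
  calc gCoeff n * (1/2)^n ≤ (gC * 2^n) * (1/2)^n := by nlinarith
    _ = gC := by rw [mul_assoc, ← mul_pow]; norm_num

lemma ext_ones {n : ℕ} {m₁ m₂ : ContinuousMultilinearMap ℝ (fun _ : Fin n => ℝ) ℝ}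
    (h : (m₁ fun _ => 1) = m₂ fun _ => 1) : m₁ = m₂ := by
  refine ContinuousMultilinearMap.ext fun v => ?_
  have e : (v : Fin n → ℝ) = fun i => v i • (1:ℝ) := by funext i; simp
  rw [e, ContinuousMultilinearMap.map_smul_univ, ContinuousMultilinearMap.map_smul_univ, h]

lemma hasFPowerSeriesOnBall_deriv {f : ℝ → ℝ} {c : ℕ → ℝ} {r : ℝ≥0∞}
    (h : HasFPowerSeriesOnBall f (ofScalars ℝ c) 0 r) :
    HasFPowerSeriesOnBall (deriv f) (ofScalars ℝ (fun n => ((n:ℝ)+1) * c (n+1))) 0 r := by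
  have hL := (ContinuousLinearMap.apply ℝ ℝ (1:ℝ)).comp_hasFPowerSeriesOnBall h.fderiv
  have hfun : (⇑(ContinuousLinearMap.apply ℝ ℝ (1:ℝ)) ∘ fderiv ℝ f) = deriv f := by
    funext y
    simp [Function.comp_apply, ContinuousLinearMap.apply_apply, fderiv_apply_one_eq_deriv]
  have hser : (ContinuousLinearMap.apply ℝ ℝ (1:ℝ)).compFormalMultilinearSeries
      (ofScalars ℝ c).derivSeries = ofScalars ℝ (fun n => ((n:ℝ)+1) * c (n+1)) := by
    funext n
    apply ext_ones
    rw [ContinuousLinearMap.compFormalMultilinearSeries_apply,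
      ContinuousLinearMap.compContinuousMultilinearMap_coe]
    simp only [Function.comp_apply, ContinuousLinearMap.apply_apply]
    rw [FormalMultilinearSeries.derivSeries_apply_diag]
    rw [ofScalars_apply_eq, ofScalars_apply_eq]
    simp [smul_eq_mul]
  rw [hfun, hser] at hL
  exact hL

lemma deriv_shift (g : ℝ → ℝ) (K t : ℝ) (hg : DifferentiableAt ℝ g (t - 1/2)) :
    deriv (fun s => K * g (s - 1/2)) t = K * deriv g (t - 1/2) := by
  have h1 : HasDerivAt (fun s : ℝ => s - 1/2) 1 t := (hasDerivAt_id t).sub_const _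
  have h2 : HasDerivAt (fun s => g (s - 1/2)) (deriv g (t - 1/2) * 1) t :=
    HasDerivAt.comp t hg.hasDerivAt h1
  simpa using (h2.const_mul K).deriv

lemma mem_gball {s : ℝ} (hs : |s - 1/2| < 1/2) :
    (s - 1/2) ∈ Metric.eball (0:ℝ) ((1/2 : ℝ≥0) : ℝ≥0∞) := by
  rw [mem_emetric_ball_zero_iff, enorm_eq_nnnorm, ENNReal.coe_lt_coe, ← NNReal.coe_lt_coe, coe_nnnorm,
    Real.norm_eq_abs]
  simpa using hs

end Aux

open FormalMultilinearSeries in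
open scoped NNReal ENNReal in
/-- `γ` satisfies the hypergeometric equation
`t(1-t)γ'' + (1-2t)γ' - γ/4 = 0` on `|t - 1/2| < 1/2`. -/
theorem gammaFun_hypergeometric_ode (t : ℝ) (ht : |t - 1 / 2| < 1 / 2) :
    t * (1 - t) * deriv (deriv gammaFun) t + (1 - 2 * t) * deriv gammaFun t
      - (1 / 4) * gammaFun t = 0 := by
  have hrpos : (0 : ℝ≥0∞) < ((1/2 : ℝ≥0) : ℝ≥0∞) := by
    rw [ENNReal.coe_pos]; norm_num
  have hppos : 0 < (ofScalars ℝ gCoeff).radius := lt_of_lt_of_le hrpos gRadius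
  set K : ℝ := 1 / (2 * Real.pi ^ ((3:ℝ)/2)) with hKdef
  set f : ℝ → ℝ := (ofScalars ℝ gCoeff).sum with hfdef
  have h0 : HasFPowerSeriesOnBall f (ofScalars ℝ gCoeff) 0 ((1/2 : ℝ≥0) : ℝ≥0∞) :=
    ((ofScalars ℝ gCoeff).hasFPowerSeriesOnBall hppos).mono hrpos gRadius
  have h1 := hasFPowerSeriesOnBall_deriv h0
  have h2 := hasFPowerSeriesOnBall_deriv h1
  have hx := mem_gball ht
  -- gammaFun in terms of f
  have hgf : gammaFun = fun s => K * f (s - 1/2) := by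
    funext s
    unfold gammaFun
    rw [hfdef]
    simp only [FormalMultilinearSeries.sum, ofScalars_apply_eq, smul_eq_mul, gCoeff]
    rfl
  -- first derivative on the ball
  have hder1 : ∀ s, |s - 1/2| < 1/2 → deriv gammaFun s = K * deriv f (s - 1/2) := by
    intro s hs
    rw [hgf]
    exact deriv_shift f K s ((h0.analyticAt_of_mem (mem_gball hs)).differentiableAt)
  have hd1 : deriv gammaFun t = K * deriv f (t - 1/2) := hder1 t ht
  -- second derivative
  have hopen : IsOpen {s : ℝ | |s - 1/2| < 1/2} := by
    have : {s : ℝ | |s - 1/2| < 1/2} = Metric.ball (1/2 : ℝ) (1/2) := by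
      ext s; simp [Metric.mem_ball, Real.dist_eq]
    rw [this]; exact Metric.isOpen_ball
  have hev : deriv gammaFun =ᶠ[nhds t] fun s => K * deriv f (s - 1/2) :=
    Filter.eventuallyEq_of_mem (hopen.mem_nhds ht) hder1
  have hd2 : deriv (deriv gammaFun) t = K * deriv (deriv f) (t - 1/2) := by
    rw [hev.deriv_eq]
    exact deriv_shift (deriv f) K t ((h1.analyticAt_of_mem hx).differentiableAt)
  have hv0 : gammaFun t = K * f (t - 1/2) := by rw [hgf]
  -- sums
  have S0 : HasSum (fun n : ℕ => gCoeff n * (t - 1/2)^n) (f (t - 1/2)) := by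
    have h := h0.hasSum hx
    simp only [zero_add, ofScalars_apply_eq, smul_eq_mul] at h
    exact h
  have S1 : HasSum (fun n : ℕ => ((n:ℝ)+1) * gCoeff (n+1) * (t - 1/2)^n) (deriv f (t - 1/2)) := by
    have h := h1.hasSum hx
    simp only [zero_add, ofScalars_apply_eq, smul_eq_mul] at h
    exact h
  have S2 : HasSum (fun n : ℕ => ((n:ℝ)+2) * ((n:ℝ)+1) * gCoeff (n+2) * (t - 1/2)^n)
      (deriv (deriv f) (t - 1/2)) := by
    have h := h2.hasSum hx
    simp only [zero_add, ofScalars_apply_eq, smul_eq_mul] at h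
    have he : (fun n : ℕ => ((n:ℝ)+1) * (((n+1:ℕ):ℝ)+1) * gCoeff (n+1+1) * (t - 1/2)^n)
        = fun n : ℕ => ((n:ℝ)+2) * ((n:ℝ)+1) * gCoeff (n+2) * (t - 1/2)^n := by
      funext n; push_cast; ring
    rw [← he]
    convert h using 2 with n
    · rfl
    push_cast
    ring
  -- shifted sums
  have S1x : HasSum (fun n : ℕ => (n:ℝ) * gCoeff n * (t - 1/2)^n)
      ((t - 1/2) * deriv f (t - 1/2)) := by
    have h := S1.mul_left (t - 1/2)
    have he : (fun n : ℕ => (t - 1/2) * (((n:ℝ)+1) * gCoeff (n+1) * (t - 1/2)^n))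
        = fun n : ℕ => (((n+1:ℕ):ℝ)) * gCoeff (n+1) * (t - 1/2)^(n+1) := by
      funext n; push_cast; ring
    rw [he] at h
    have h' := (hasSum_nat_add_iff (f := fun n : ℕ => (n:ℝ) * gCoeff n * (t - 1/2)^n) 1).mp h
    simpa using h'
  have S2x : HasSum (fun n : ℕ => (n:ℝ) * ((n:ℝ) - 1) * gCoeff n * (t - 1/2)^n)
      ((t - 1/2)^2 * deriv (deriv f) (t - 1/2)) := by
    have h := S2.mul_left ((t - 1/2)^2)
    have he : (fun n : ℕ => (t - 1/2)^2 * (((n:ℝ)+2) * ((n:ℝ)+1) * gCoeff (n+2) * (t - 1/2)^n))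
        = fun n : ℕ => (((n+2:ℕ):ℝ)) * (((n+2:ℕ):ℝ) - 1) * gCoeff (n+2) * (t - 1/2)^(n+2) := by
      funext n; push_cast; ring
    rw [he] at h
    have h' := (hasSum_nat_add_iff
      (f := fun n : ℕ => (n:ℝ) * ((n:ℝ) - 1) * gCoeff n * (t - 1/2)^n) 2).mp h
    simpa [Finset.sum_range_succ] using h'
  -- combine
  have Scomb := (((S2.mul_left (1/4)).sub S2x).sub (S1x.mul_left 2)).sub (S0.mul_left (1/4))
  have hzero : (fun n : ℕ =>
      1/4 * (((n:ℝ)+2) * ((n:ℝ)+1) * gCoeff (n+2) * (t - 1/2)^n)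
        - (n:ℝ) * ((n:ℝ) - 1) * gCoeff n * (t - 1/2)^n
        - 2 * ((n:ℝ) * gCoeff n * (t - 1/2)^n)
        - 1/4 * (gCoeff n * (t - 1/2)^n)) = fun _ => (0:ℝ) := by
    funext n
    have h := gCoeff_rec n
    linear_combination ((t - 1/2)^n / 4) * h
  rw [hzero] at Scomb
  have hval := Scomb.unique hasSum_zero
  rw [hv0, hd1, hd2]
  linear_combination K * hval
end

section
/- Define rational numbers v(n) by v(0) = 1 and, for n ≥ 1, v(n) = 2^{n-1}(1·5·9⋯(4n-3))² − (1/2)∑_{m=1}^{n-1} C(2n,2m) v(m) v(n-m). Then v(n) is an integer for all n ≥ 0. -/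
open Finset

/-- The central binomial coefficient is even for `n ≥ 1`. -/
lemma central_even_aux {n : ℕ} (hn : 1 ≤ n) : 2 ∣ Nat.choose (2 * n) n := by
  obtain ⟨m, rfl⟩ : ∃ m, n = m + 1 := ⟨n - 1, by omega⟩
  have h1 : 2 * (m + 1) = (2 * m + 1) + 1 := by ring
  rw [h1, Nat.choose_succ_succ, Nat.choose_symm_half]
  exact ⟨(2 * m + 1).choose m, by ring⟩

/-- If `v(0) = 1` and for `n ≥ 1`,
`v(n) = 2^{n-1}(1·5·9⋯(4n-3))² − (1/2)∑_{m=1}^{n-1} C(2n,2m) v(m) v(n-m)`,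
then every `v(n)` is an integer. -/
theorem v_integer (v : ℕ → ℚ) (h0 : v 0 = 1)
    (hrec : ∀ n : ℕ, 1 ≤ n →
      v n = 2 ^ (n - 1) * (∏ i ∈ Finset.range n, (4 * (i : ℚ) + 1)) ^ 2
        - (1 / 2) * ∑ m ∈ Finset.Ico 1 n, (Nat.choose (2 * n) (2 * m) : ℚ) * v m * v (n - m)) :
    ∀ n : ℕ, ∃ k : ℤ, v n = (k : ℚ) := by
  intro n
  induction n using Nat.strong_induction_on with
  | _ n ih =>
  rcases Nat.eq_zero_or_pos n with rfl | hn
  · exact ⟨1, by simpa using h0⟩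
  classical
  choose k hk using fun m (hm : m < n) => ih m hm
  set K : ℕ → ℤ := fun m => if hm : m < n then k m hm else 0 with hKdef
  have hvK : ∀ m, m < n → v m = (K m : ℚ) := by
    intro m hm
    simp only [hKdef, dif_pos hm]
    exact hk m hm
  set S : ℤ := ∑ m ∈ Finset.Ico 1 n, (Nat.choose (2 * n) (2 * m) : ℤ) * K m * K (n - m)
    with hSdef
  have hsum : (∑ m ∈ Finset.Ico 1 n, (Nat.choose (2 * n) (2 * m) : ℚ) * v m * v (n - m))
      = (S : ℚ) := by
    rw [hSdef]
    push_cast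
    refine Finset.sum_congr rfl ?_
    intro m hm
    simp only [Finset.mem_Ico] at hm
    rw [hvK m hm.2, hvK (n - m) (by omega)]
  have hSeven : 2 ∣ S := by
    have hz : ((S : ℤ) : ZMod 2) = 0 := by
      rw [hSdef]
      push_cast
      refine Finset.sum_involution (fun a _ => n - a) ?_ ?_ ?_ ?_
      · intro a ha
        simp only [Finset.mem_Ico] at ha
        have h1 : n - (n - a) = a := by omega
        have h2 : 2 * (n - a) = 2 * n - 2 * a := by omega
        have h3 : Nat.choose (2 * n) (2 * (n - a)) = Nat.choose (2 * n) (2 * a) := by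
          rw [h2, Nat.choose_symm (by omega)]
        show ((2 * n).choose (2 * a) : ZMod 2) * (K a : ZMod 2) * (K (n - a) : ZMod 2)
            + ((2 * n).choose (2 * (n - a)) : ZMod 2) * (K (n - a) : ZMod 2) * (K (n - (n - a)) : ZMod 2) = 0
        rw [h1, h3, mul_right_comm]
        exact CharTwo.add_self_eq_zero (R := ZMod 2) _
      · intro a ha hfa
        simp only [Finset.mem_Ico] at ha
        intro heq
        have heq' : n - a = a := heq
        apply hfa
        have hna : n = 2 * a := by omega
        have hdvd : 2 ∣ Nat.choose (2 * n) (2 * a) := by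
          rw [hna]
          exact central_even_aux (by omega)
        obtain ⟨c, hc⟩ := hdvd
        rw [hc]
        push_cast
        rw [show (2 : ZMod 2) = 0 from rfl]
        simp
      · intro a ha
        simp only [Finset.mem_Ico] at ha ⊢
        omega
      · intro a ha
        simp only [Finset.mem_Ico] at ha
        show n - (n - a) = a
        omega
    exact (ZMod.intCast_zmod_eq_zero_iff_dvd S 2).mp hz
  obtain ⟨T, hT⟩ := hSeven
  refine ⟨2 ^ (n - 1) * (∏ i ∈ Finset.range n, (4 * (i : ℤ) + 1)) ^ 2 - T, ?_⟩
  rw [hrec n hn, hsum, hT]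
  push_cast
  ring
end

section
/- Let f(x) = ∑_{j=1}^∞ (a_j/j!) x^j be a formal power series over ℤ with zero constant term, where all a_j are integers. Then for all n, k ≥ 0, the number b_{n,k} = (n!/k!) · [x^n] f(x)^k is an integer. -/
open PowerSeries Finset

/-- Exponential-formula integrality: if `f(x) = ∑_{j≥1} (a_j/j!) x^j` with all `a_j`
integers (and zero constant term), then `b_{n,k} = (n!/k!)·[xⁿ] f(x)^k` is an integer
for all `n, k ≥ 0`. -/
theorem exp_formula_integrality (a : ℕ → ℤ) (ha0 : a 0 = 0) (f : PowerSeries ℚ)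
    (hf : ∀ j : ℕ, PowerSeries.coeff j f = (a j : ℚ) / (Nat.factorial j : ℚ)) :
    ∀ n k : ℕ, ∃ b : ℤ,
      ((Nat.factorial n : ℚ) / (Nat.factorial k : ℚ)) * PowerSeries.coeff n (f ^ k)
        = (b : ℚ) := by
  intro n
  induction n using Nat.strong_induction_on with
  | _ n ih =>
    match n with
    | 0 =>
      intro k
      match k with
      | 0 => exact ⟨1, by simp⟩
      | k + 1 =>
        refine ⟨0, ?_⟩
        have h0 : constantCoeff f = 0 := by
          have := hf 0
          rw [coeff_zero_eq_constantCoeff] at this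
          simp [this, ha0]
        rw [coeff_zero_eq_constantCoeff, map_pow, h0]
        simp
    | n + 1 =>
      intro k
      match k with
      | 0 =>
        refine ⟨0, ?_⟩
        simp [coeff_one]
      | k + 1 =>
        -- choose integer witnesses for smaller n
        have hch : ∀ m : ℕ, ∃ b : ℤ, m ≤ n →
            ((Nat.factorial m : ℚ) / (Nat.factorial k : ℚ)) * coeff m (f ^ k) = b := by
          intro m
          by_cases hm : m ≤ n
          · obtain ⟨b, hb⟩ := ih m (Nat.lt_succ_of_le hm) k
            exact ⟨b, fun _ => hb⟩
          · exact ⟨0, fun h => absurd h hm⟩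
        choose g hg using hch
        refine ⟨∑ p ∈ Finset.HasAntidiagonal.antidiagonal n, (n.choose p.1 : ℤ) * a (p.2 + 1) * g p.1, ?_⟩
        -- derivative identity
        have key : ((n:ℚ)+1) * coeff (n+1) (f ^ (k+1))
            = ((k:ℚ)+1) * ∑ p ∈ Finset.HasAntidiagonal.antidiagonal n,
                coeff p.1 (f ^ k) * (coeff (p.2+1) f * ((p.2:ℚ)+1)) := by
          have h := coeff_derivative (f ^ (k+1)) n
          have hD : d⁄dX ℚ (f ^ (k+1)) = (k+1) • (f ^ k) • d⁄dX ℚ f := by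
            simpa using Derivation.leibniz_pow (d⁄dX ℚ) f (k+1)
          rw [hD] at h
          rw [mul_comm, ← h, map_nsmul, nsmul_eq_mul, smul_eq_mul, coeff_mul]
          push_cast
          simp [coeff_derivative]
        have hk1 : ((k:ℚ)+1) ≠ 0 := by positivity
        have hn1 : ((n:ℚ)+1) ≠ 0 := by positivity
        have hLHS : ((Nat.factorial (n+1) : ℚ) / (Nat.factorial (k+1) : ℚ))
              * coeff (n+1) (f ^ (k+1))
            = ((Nat.factorial n : ℚ) / (Nat.factorial k : ℚ))
              * ∑ p ∈ Finset.HasAntidiagonal.antidiagonal n,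
                coeff p.1 (f ^ k) * (coeff (p.2+1) f * ((p.2:ℚ)+1)) := by
          have e1 : ((Nat.factorial (n+1) : ℚ)) = ((n:ℚ)+1) * (Nat.factorial n : ℚ) := by
            push_cast [Nat.factorial_succ]; ring
          have e2 : ((Nat.factorial (k+1) : ℚ)) = ((k:ℚ)+1) * (Nat.factorial k : ℚ) := by
            push_cast [Nat.factorial_succ]; ring
          rw [e1, e2]
          have hkf : (Nat.factorial k : ℚ) ≠ 0 := Nat.cast_ne_zero.mpr k.factorial_ne_zero
          field_simp
          simp_rw [← mul_assoc] at key
          linear_combination key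
        rw [hLHS, Finset.mul_sum]
        push_cast
        rw [Finset.sum_congr rfl]
        intro p hp
        rw [Finset.HasAntidiagonal.mem_antidiagonal] at hp
        have hp1 : p.1 ≤ n := by omega
        have hg1 := hg p.1 hp1
        have hfact : (Nat.factorial n : ℚ)
            = (n.choose p.1 : ℚ) * (Nat.factorial p.1 : ℚ) * (Nat.factorial p.2 : ℚ) := by
          have := Nat.choose_mul_factorial_mul_factorial hp1
          have h2 : n - p.1 = p.2 := by omega
          rw [h2] at this
          push_cast [← this]; ring
        have hf2 := hf (p.2 + 1)
        have e3 : (Nat.factorial (p.2+1) : ℚ) = ((p.2:ℚ)+1) * (Nat.factorial p.2 : ℚ) := by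
          push_cast [Nat.factorial_succ]; ring
        rw [hf2, e3, hfact]
        have hkf : (Nat.factorial k : ℚ) ≠ 0 := Nat.cast_ne_zero.mpr k.factorial_ne_zero
        have hp2f : (Nat.factorial p.2 : ℚ) ≠ 0 := Nat.cast_ne_zero.mpr p.2.factorial_ne_zero
        have hp21 : ((p.2:ℚ)+1) ≠ 0 := by positivity
        rw [← hg1]
        field_simp
end

section
/- Let U(t) = ∑_{j=0}^∞ (u(j)/(2j+1)!) t^j be a formal power series where all u(j) are integers. Then for all 1 ≤ k ≤ n, the quantity r(n,k) = 2^{n-k} · ((2n)!/(2k)!) · [t^{n-k}] U(t)^{2k} is an integer. -/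
open PowerSeries

/-- Key integrality lemma: `(2m+k)! · [t^m] U^k` is an integer multiple of `k!`. -/
lemma aux_integrality (u : ℕ → ℤ) (U : PowerSeries ℚ)
    (hU : ∀ j : ℕ, PowerSeries.coeff j U = (u j : ℚ) / (Nat.factorial (2 * j + 1) : ℚ)) :
    ∀ k m : ℕ, ∃ b : ℤ, ((Nat.factorial (2 * m + k) : ℚ)) * PowerSeries.coeff m (U ^ k)
      = (b : ℚ) * (Nat.factorial k : ℚ) := by
  intro k
  induction k with
  | zero =>
    intro m
    refine ⟨if m = 0 then (2 * m).factorial else 0, ?_⟩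
    by_cases h : m = 0 <;> simp [h, PowerSeries.coeff_one]
  | succ k ih =>
    choose b hb using ih
    intro m
    -- claim 1: plain convolution
    have claim1 : PowerSeries.coeff m (U ^ (k + 1))
        = ∑ p ∈ Finset.HasAntidiagonal.antidiagonal m,
            PowerSeries.coeff p.1 (U ^ k) * PowerSeries.coeff p.2 U := by
      rw [pow_succ, PowerSeries.coeff_mul]
    -- claim 2: derivative identity
    have claim2 : (m : ℚ) * PowerSeries.coeff m (U ^ (k + 1))
        = ((k : ℚ) + 1) * ∑ p ∈ Finset.HasAntidiagonal.antidiagonal m,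
            PowerSeries.coeff p.1 (U ^ k) * ((p.2 : ℚ) * PowerSeries.coeff p.2 U) := by
      cases m with
      | zero => simp
      | succ m' =>
        have hd : (d⁄dX ℚ) (U ^ (k + 1)) = (k + 1) • (U ^ k • (d⁄dX ℚ) U) := by
          simpa using Derivation.leibniz_pow (d⁄dX ℚ) (a := U) (k + 1)
        have h1 : PowerSeries.coeff m' ((d⁄dX ℚ) (U ^ (k + 1)))
            = PowerSeries.coeff (m' + 1) (U ^ (k + 1)) * ((m' : ℚ) + 1) :=
          PowerSeries.coeff_derivative _ _
        have h2 : PowerSeries.coeff m' ((d⁄dX ℚ) (U ^ (k + 1)))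
            = ((k : ℚ) + 1) * ∑ q ∈ Finset.HasAntidiagonal.antidiagonal m',
                PowerSeries.coeff q.1 (U ^ k)
                  * (PowerSeries.coeff (q.2 + 1) U * ((q.2 : ℚ) + 1)) := by
          rw [hd, smul_eq_mul, map_nsmul, nsmul_eq_mul]
          push_cast
          congr 1
          rw [PowerSeries.coeff_mul]
          refine Finset.sum_congr rfl fun q _ => ?_
          rw [PowerSeries.coeff_derivative]
        calc ((m' + 1 : ℕ) : ℚ) * PowerSeries.coeff (m' + 1) (U ^ (k + 1))
            = PowerSeries.coeff m' ((d⁄dX ℚ) (U ^ (k + 1))) := by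
              rw [h1]; push_cast; ring
          _ = ((k : ℚ) + 1) * ∑ q ∈ Finset.HasAntidiagonal.antidiagonal m',
                PowerSeries.coeff q.1 (U ^ k)
                  * (PowerSeries.coeff (q.2 + 1) U * ((q.2 : ℚ) + 1)) := h2
          _ = ((k : ℚ) + 1) * ∑ p ∈ Finset.HasAntidiagonal.antidiagonal (m' + 1),
                PowerSeries.coeff p.1 (U ^ k) * ((p.2 : ℚ) * PowerSeries.coeff p.2 U) := by
              rw [Finset.Nat.sum_antidiagonal_succ'
                (f := fun p => PowerSeries.coeff p.1 (U ^ k)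
                  * ((p.2 : ℚ) * PowerSeries.coeff p.2 U))]
              simp only [Nat.cast_zero, zero_mul, mul_zero, zero_add]
              congr 1
              refine Finset.sum_congr rfl fun q _ => ?_
              push_cast
              ring
    -- combined identity
    have split : ∑ p ∈ Finset.HasAntidiagonal.antidiagonal m,
          PowerSeries.coeff p.1 (U ^ k)
            * ((2 * (p.2 : ℚ) + 1) * PowerSeries.coeff p.2 U)
        = 2 * (∑ p ∈ Finset.HasAntidiagonal.antidiagonal m,
            PowerSeries.coeff p.1 (U ^ k) * ((p.2 : ℚ) * PowerSeries.coeff p.2 U))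
          + ∑ p ∈ Finset.HasAntidiagonal.antidiagonal m,
            PowerSeries.coeff p.1 (U ^ k) * PowerSeries.coeff p.2 U := by
      rw [Finset.mul_sum, ← Finset.sum_add_distrib]
      refine Finset.sum_congr rfl fun p _ => by ring
    have key : ((2 * m + (k + 1) : ℕ) : ℚ) * PowerSeries.coeff m (U ^ (k + 1))
        = ((k : ℚ) + 1) * ∑ p ∈ Finset.HasAntidiagonal.antidiagonal m,
            PowerSeries.coeff p.1 (U ^ k)
              * ((2 * (p.2 : ℚ) + 1) * PowerSeries.coeff p.2 U) := by
      rw [split]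
      calc ((2 * m + (k + 1) : ℕ) : ℚ) * PowerSeries.coeff m (U ^ (k + 1))
          = 2 * ((m : ℚ) * PowerSeries.coeff m (U ^ (k + 1)))
            + ((k : ℚ) + 1) * PowerSeries.coeff m (U ^ (k + 1)) := by push_cast; ring
        _ = 2 * (((k : ℚ) + 1) * ∑ p ∈ Finset.HasAntidiagonal.antidiagonal m,
              PowerSeries.coeff p.1 (U ^ k) * ((p.2 : ℚ) * PowerSeries.coeff p.2 U))
            + ((k : ℚ) + 1) * ∑ p ∈ Finset.HasAntidiagonal.antidiagonal m,
              PowerSeries.coeff p.1 (U ^ k) * PowerSeries.coeff p.2 U := by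
              rw [claim2, claim1]
        _ = _ := by ring
    -- now multiply by (2m+k)! and use the inductive hypothesis termwise
    refine ⟨∑ p ∈ Finset.HasAntidiagonal.antidiagonal m,
      ((2 * m + k).choose (2 * p.2) : ℤ) * u p.2 * b p.1, ?_⟩
    have hfact : ((2 * m + (k + 1)).factorial : ℚ)
        = ((2 * m + k).factorial : ℚ) * ((2 * m + (k + 1) : ℕ) : ℚ) := by
      have : (2 * m + (k + 1)).factorial = (2 * m + k + 1).factorial := by ring_nf
      rw [this, Nat.factorial_succ]
      push_cast
      ring_nf
    rw [hfact, mul_assoc, key, ← mul_assoc, mul_comm (((2 * m + k).factorial : ℚ)),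
      mul_assoc, Finset.mul_sum]
    have termwise : ∀ p ∈ Finset.HasAntidiagonal.antidiagonal m,
        ((2 * m + k).factorial : ℚ) * (PowerSeries.coeff p.1 (U ^ k)
            * ((2 * (p.2 : ℚ) + 1) * PowerSeries.coeff p.2 U))
        = ((((2 * m + k).choose (2 * p.2) : ℤ) * u p.2 * b p.1 : ℤ) : ℚ)
            * (Nat.factorial k : ℚ) := by
      intro p hp
      have hpm : p.1 + p.2 = m := Finset.HasAntidiagonal.mem_antidiagonal.mp hp
      have hle : 2 * p.2 ≤ 2 * m + k := by omega
      have hsub : 2 * m + k - 2 * p.2 = 2 * p.1 + k := by omega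
      have hcoeffU : PowerSeries.coeff p.2 U
          = (u p.2 : ℚ) / (Nat.factorial (2 * p.2 + 1) : ℚ) := hU p.2
      have hbp := hb p.1
      have hchoose : (((2 * m + k).choose (2 * p.2)) : ℚ)
          = ((2 * m + k).factorial : ℚ)
            / ((Nat.factorial (2 * p.2) : ℚ) * (Nat.factorial (2 * p.1 + k) : ℚ)) := by
        rw [Nat.cast_choose ℚ hle, hsub]
      have hne1 : (Nat.factorial (2 * p.1 + k) : ℚ) ≠ 0 :=
        Nat.cast_ne_zero.mpr (Nat.factorial_ne_zero _)
      have hne2 : (Nat.factorial (2 * p.2 + 1) : ℚ) ≠ 0 :=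
        Nat.cast_ne_zero.mpr (Nat.factorial_ne_zero _)
      have hne3 : (Nat.factorial (2 * p.2) : ℚ) ≠ 0 :=
        Nat.cast_ne_zero.mpr (Nat.factorial_ne_zero _)
      have hcoeffk : PowerSeries.coeff p.1 (U ^ k)
          = (b p.1 : ℚ) * (Nat.factorial k : ℚ) / (Nat.factorial (2 * p.1 + k) : ℚ) := by
        field_simp at hbp ⊢
        linarith [hbp]
      have hfac21 : (Nat.factorial (2 * p.2 + 1) : ℚ)
          = (2 * (p.2 : ℚ) + 1) * (Nat.factorial (2 * p.2) : ℚ) := by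
        rw [Nat.factorial_succ]; push_cast; ring
      rw [hcoeffU, hcoeffk]
      push_cast
      rw [hchoose, hfac21]
      have h21 : (2 * (p.2 : ℚ) + 1) ≠ 0 := by positivity
      field_simp
    rw [Finset.sum_congr rfl termwise]
    rw [← Finset.sum_mul]
    push_cast
    rw [Nat.factorial_succ]
    push_cast
    ring

/-- If `U(t) = ∑_{j≥0} (u(j)/(2j+1)!) t^j` with all `u(j)` integers, then for
`1 ≤ k ≤ n` the quantity `r(n,k) = 2^{n-k}·((2n)!/(2k)!)·[t^{n-k}] U(t)^{2k}` is an
integer. -/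
theorem r_integer (u : ℕ → ℤ) (U : PowerSeries ℚ)
    (hU : ∀ j : ℕ, PowerSeries.coeff j U = (u j : ℚ) / (Nat.factorial (2 * j + 1) : ℚ)) :
    ∀ n k : ℕ, 1 ≤ k → k ≤ n → ∃ r : ℤ,
      (2 : ℚ) ^ (n - k) * ((Nat.factorial (2 * n) : ℚ) / (Nat.factorial (2 * k) : ℚ))
          * PowerSeries.coeff (n - k) (U ^ (2 * k)) = (r : ℚ) := by
  intro n k _hk hkn
  obtain ⟨b, hb⟩ := aux_integrality u U hU (2 * k) (n - k)
  have hfe : 2 * (n - k) + 2 * k = 2 * n := by omega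
  rw [hfe] at hb
  refine ⟨2 ^ (n - k) * b, ?_⟩
  have hne : (Nat.factorial (2 * k) : ℚ) ≠ 0 := Nat.cast_ne_zero.mpr (Nat.factorial_ne_zero _)
  have : (2 : ℚ) ^ (n - k) * ((Nat.factorial (2 * n) : ℚ) / (Nat.factorial (2 * k) : ℚ))
          * PowerSeries.coeff (n - k) (U ^ (2 * k))
      = (2 : ℚ) ^ (n - k) * (((Nat.factorial (2 * n) : ℚ)
          * PowerSeries.coeff (n - k) (U ^ (2 * k))) / (Nat.factorial (2 * k) : ℚ)) := by
    ring
  rw [this, hb]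
  rw [mul_div_assoc, div_self hne, mul_one]
  push_cast
  ring
end
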